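/- Let G₀ and G₁ be finite simple connected graphs with roots r₀, r₁, and let NS(G₀,G₁,k) be the graph obtained from the disjoint union of G₀ and G₁ by connecting r₀ to r₁ via a path with k-1 new internal vertices (so NS(G₀,G₁,1) joins the roots by a single edge). Then every connected dominating set of NS(G₀,G₁,k) contains all the k-1 internal path vertices together with r₀ and r₁ whenever both G₀ and G₁ have at least 2 vertices; and the map D ↦ D ∪ {new internal vertices} is a bijection from connected dominating sets of NS(G₀,G₁,1) to connected dominating sets of NS(G₀,G₁,k), shifting cardinality by k-1. Consequently D^c_{NS(G₀,G₁,k)}(-1) = (-1)^{k-1} D^c_{NS(G₀,G₁,1)}(-1). -/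

import Mathlib

open Finset

attribute [local instance] Classical.propDecidable

/-- `D` is a connected dominating set of `G`. -/
def ConnDomSet {V : Type*} (G : SimpleGraph V) (D : Finset V) : Prop :=
  D.Nonempty ∧ (G.induce (D : Set V)).Connected ∧
    ∀ v : V, v ∈ D ∨ ∃ u ∈ D, G.Adj u v

/-- The "neck-stretch" graph `NS(G₀, G₁, k)` with `j = k - 1` internal
vertices: the disjoint union of `G₀` and `G₁` with the roots `r₀, r₁` joined
by a path `r₀ — p₀ — ⋯ — p_{j-1} — r₁` through `j` new vertices (for `j = 0`,
the roots are joined by a single edge). -/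
def nsGraph {V₀ V₁ : Type*} (G₀ : SimpleGraph V₀) (G₁ : SimpleGraph V₁)
    (r₀ : V₀) (r₁ : V₁) (j : ℕ) : SimpleGraph (V₀ ⊕ V₁ ⊕ Fin j) :=
  SimpleGraph.fromRel (fun a b =>
    match a, b with
    | Sum.inl a, Sum.inl b => G₀.Adj a b
    | Sum.inr (Sum.inl a), Sum.inr (Sum.inl b) => G₁.Adj a b
    | Sum.inl a, Sum.inr (Sum.inr p) => a = r₀ ∧ (p : ℕ) = 0
    | Sum.inr (Sum.inl b), Sum.inr (Sum.inr p) => b = r₁ ∧ (p : ℕ) + 1 = j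
    | Sum.inr (Sum.inr p), Sum.inr (Sum.inr q) => (q : ℕ) = (p : ℕ) + 1
    | Sum.inl a, Sum.inr (Sum.inl b) => j = 0 ∧ a = r₀ ∧ b = r₁
    | _, _ => False)

/-- The canonical embedding of the vertices of `NS(G₀,G₁,1)` into those of
`NS(G₀,G₁,k)`. -/
def nsEmb (V₀ V₁ : Type*) (j : ℕ) : (V₀ ⊕ V₁ ⊕ Fin 0) ↪ (V₀ ⊕ V₁ ⊕ Fin j) :=
  (Function.Embedding.refl V₀).sumMap
    ((Function.Embedding.refl V₁).sumMap ⟨Fin.elim0, fun a => a.elim0⟩)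

namespace NSaux
variable {V₀ V₁ : Type*} {G₀ : SimpleGraph V₀} {G₁ : SimpleGraph V₁} {r₀ : V₀} {r₁ : V₁} {j : ℕ}

def lev (j : ℕ) : (V₀ ⊕ V₁ ⊕ Fin j) → ℕ
  | Sum.inl _ => 0
  | Sum.inr (Sum.inl _) => j + 1
  | Sum.inr (Sum.inr p) => (p : ℕ) + 1

lemma adj_lev {u v : V₀ ⊕ V₁ ⊕ Fin j} (h : (nsGraph G₀ G₁ r₀ r₁ j).Adj u v) :
    lev j u ≤ lev j v + 1 ∧ lev j v ≤ lev j u + 1 := by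
  rcases u with a | b | p <;> rcases v with a' | b' | p' <;>
    simp [nsGraph, SimpleGraph.fromRel_adj, lev] at h ⊢ <;> omega

lemma lev_eq_zero {u : V₀ ⊕ V₁ ⊕ Fin j} (h : lev j u = 0) : ∃ a, u = Sum.inl a := by
  rcases u with a | b | p <;> simp_all [lev]

lemma lev_unique {p : Fin j} {u : V₀ ⊕ V₁ ⊕ Fin j} (h : lev j u = (p : ℕ) + 1) :
    u = Sum.inr (Sum.inr p) := by
  rcases u with a | b | q <;> simp_all [lev]
  · exact absurd h (by have := p.isLt; omega)
  · exact Fin.ext h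

-- adjacency to a left vertex at level 0 from a level ≥ 1 vertex forces r₀
lemma adj_to_left {u : V₀ ⊕ V₁ ⊕ Fin j} {a : V₀} (hu : 1 ≤ lev j u)
    (h : (nsGraph G₀ G₁ r₀ r₁ j).Adj u (Sum.inl a)) : a = r₀ := by
  rcases u with a' | b | p <;> simp [nsGraph, SimpleGraph.fromRel_adj, lev] at h hu <;> tauto

lemma adj_to_right {u : V₀ ⊕ V₁ ⊕ Fin j} {b : V₁} (hu : lev j u ≤ j)
    (h : (nsGraph G₀ G₁ r₀ r₁ j).Adj u (Sum.inr (Sum.inl b))) : b = r₁ := by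
  rcases u with a' | b' | p <;> simp [nsGraph, SimpleGraph.fromRel_adj, lev] at h hu <;> tauto

lemma walk_r0 {u v : V₀ ⊕ V₁ ⊕ Fin j} (w : (nsGraph G₀ G₁ r₀ r₁ j).Walk u v)
    (hu : 1 ≤ lev j u) (hv : lev j v = 0) : Sum.inl r₀ ∈ w.support := by
  induction w with
  | nil => omega
  | @cons x y z h p ih =>
    rw [SimpleGraph.Walk.support_cons, List.mem_cons]
    by_cases hy : 1 ≤ lev j y
    · exact Or.inr (ih hy hv)
    · obtain ⟨a, rfl⟩ := lev_eq_zero (by omega : lev j y = 0)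
      have ha := adj_to_left hu h
      subst ha
      exact Or.inr p.start_mem_support

lemma walk_r1 {u v : V₀ ⊕ V₁ ⊕ Fin j} (w : (nsGraph G₀ G₁ r₀ r₁ j).Walk u v)
    (hu : lev j u ≤ j) (hv : lev j v = j + 1) : Sum.inr (Sum.inl r₁) ∈ w.support := by
  induction w with
  | nil => omega
  | @cons x y z h p ih =>
    rw [SimpleGraph.Walk.support_cons, List.mem_cons]
    by_cases hy : lev j y ≤ j
    · exact Or.inr (ih hy hv)
    · have hy1 : lev j y = j + 1 := by
        have := (adj_lev h).2
        omega
      have : ∃ b, y = Sum.inr (Sum.inl b) := by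
        rcases y with a | b | q
        · simp [lev] at hy1
        · exact ⟨b, rfl⟩
        · have := q.isLt; simp [lev] at hy1; omega
      obtain ⟨b, rfl⟩ := this
      have hb := adj_to_right hu h
      subst hb
      exact Or.inr p.start_mem_support

lemma walk_ivt {u v : V₀ ⊕ V₁ ⊕ Fin j} (w : (nsGraph G₀ G₁ r₀ r₁ j).Walk u v)
    (i : ℕ) (hu : lev j u ≤ i) (hv : i ≤ lev j v) : ∃ x ∈ w.support, lev j x = i := by
  induction w with
  | @nil x => exact ⟨x, by simp, by omega⟩
  | @cons x y z h p ih =>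
    by_cases hx : lev j x = i
    · exact ⟨x, by simp, hx⟩
    · have hy : lev j y ≤ i := by have := (adj_lev h).2; omega
      obtain ⟨w', hw1, hw2⟩ := ih hy hv
      exact ⟨w', by simp [hw1], hw2⟩

lemma reach_of_walk {V W : Type*} {G : SimpleGraph V} {H : SimpleGraph W} (f : V → W)
    (hf : ∀ a b, G.Adj a b → H.Reachable (f a) (f b)) {u v : V} (w : G.Walk u v) :
    H.Reachable (f u) (f v) := by
  induction w with
  | nil => exact SimpleGraph.Reachable.refl _
  | cons h p ih => exact (hf _ _ h).trans ih

lemma adj_inl {a b : V₀} (h : G₀.Adj a b) :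
    (nsGraph G₀ G₁ r₀ r₁ j).Adj (Sum.inl a) (Sum.inl b) := by
  simp [nsGraph, SimpleGraph.fromRel_adj, h, h.ne]

lemma adj_inr {a b : V₁} (h : G₁.Adj a b) :
    (nsGraph G₀ G₁ r₀ r₁ j).Adj (Sum.inr (Sum.inl a)) (Sum.inr (Sum.inl b)) := by
  simp [nsGraph, SimpleGraph.fromRel_adj, h, h.ne]

lemma adj_r0_p {p : Fin j} (hp : (p : ℕ) = 0) :
    (nsGraph G₀ G₁ r₀ r₁ j).Adj (Sum.inl r₀) (Sum.inr (Sum.inr p)) := by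
  simp [nsGraph, SimpleGraph.fromRel_adj, hp]

lemma adj_p_p {p q : Fin j} (h : (q : ℕ) = (p : ℕ) + 1) :
    (nsGraph G₀ G₁ r₀ r₁ j).Adj (Sum.inr (Sum.inr p)) (Sum.inr (Sum.inr q)) := by
  have : p ≠ q := by intro e; subst e; omega
  simp [nsGraph, SimpleGraph.fromRel_adj, h, this]

lemma adj_r1_p {p : Fin j} (hp : (p : ℕ) + 1 = j) :
    (nsGraph G₀ G₁ r₀ r₁ j).Adj (Sum.inr (Sum.inl r₁)) (Sum.inr (Sum.inr p)) := by
  simp [nsGraph, SimpleGraph.fromRel_adj, hp]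

lemma adj_roots0 : (nsGraph G₀ G₁ r₀ r₁ 0).Adj (Sum.inl r₀) (Sum.inr (Sum.inl r₁)) := by
  simp [nsGraph, SimpleGraph.fromRel_adj]

lemma cds_mem [Fintype V₀] [Fintype V₁] (hV₀ : 2 ≤ Fintype.card V₀) (hV₁ : 2 ≤ Fintype.card V₁)
    {D : Finset (V₀ ⊕ V₁ ⊕ Fin j)} (hD : ConnDomSet (nsGraph G₀ G₁ r₀ r₁ j) D) :
    (∀ p : Fin j, Sum.inr (Sum.inr p) ∈ D) ∧ Sum.inl r₀ ∈ D ∧ Sum.inr (Sum.inl r₁) ∈ D := by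
  obtain ⟨hne, hconn, hdom⟩ := hD
  obtain ⟨a, ha⟩ := Fintype.exists_ne_of_one_lt_card (by omega) r₀
  obtain ⟨b, hb⟩ := Fintype.exists_ne_of_one_lt_card (by omega) r₁
  have hx : ∃ x, Sum.inl x ∈ D := by
    rcases hdom (Sum.inl a) with h | ⟨u, hu, hadj⟩
    · exact ⟨a, h⟩
    · rcases u with a' | b' | p'
      · exact ⟨a', hu⟩
      · exact absurd (adj_to_left (by simp [lev]) hadj) ha
      · exact absurd (adj_to_left (by simp [lev]) hadj) ha
  have hy : ∃ y, Sum.inr (Sum.inl y) ∈ D := by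
    rcases hdom (Sum.inr (Sum.inl b)) with h | ⟨u, hu, hadj⟩
    · exact ⟨b, h⟩
    · rcases u with a' | b' | p'
      · exact absurd (adj_to_right (by simp [lev]) hadj) hb
      · exact ⟨b', hu⟩
      · exact absurd (adj_to_right (by simp [lev]) hadj) hb
  obtain ⟨x, hxD⟩ := hx
  obtain ⟨y, hyD⟩ := hy
  obtain ⟨w0⟩ := hconn.preconnected ⟨Sum.inl x, hxD⟩ ⟨Sum.inr (Sum.inl y), hyD⟩
  let f := SimpleGraph.Embedding.induce (↑D : Set (V₀ ⊕ V₁ ⊕ Fin j))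
    (G := nsGraph G₀ G₁ r₀ r₁ j)
  let w : (nsGraph G₀ G₁ r₀ r₁ j).Walk (Sum.inl x) (Sum.inr (Sum.inl y)) := w0.map f.toHom
  have hsupp : ∀ z ∈ w.support, z ∈ D := by
    intro z hz
    rw [show w.support = w0.support.map f.toHom from SimpleGraph.Walk.support_map _ _,
      List.mem_map] at hz
    obtain ⟨⟨z', hz'⟩, -, rfl⟩ := hz
    exact hz'
  refine ⟨fun p => ?_, ?_, ?_⟩
  · obtain ⟨x', hx1, hx2⟩ := walk_ivt w ((p : ℕ) + 1) (by simp [lev]) (by simp [lev])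
    exact (lev_unique hx2) ▸ hsupp _ hx1
  · have := walk_r0 w.reverse (by simp [lev]) (by simp [lev])
    rw [SimpleGraph.Walk.support_reverse, List.mem_reverse] at this
    exact hsupp _ this
  · exact hsupp _ (walk_r1 w (by simp [lev]) (by simp [lev]))

lemma emb_inl (a : V₀) : nsEmb V₀ V₁ j (Sum.inl a) = Sum.inl a := rfl
lemma emb_inr (b : V₁) : nsEmb V₀ V₁ j (Sum.inr (Sum.inl b)) = Sum.inr (Sum.inl b) := rfl

lemma emb_ne_path (x : V₀ ⊕ V₁ ⊕ Fin 0) (p : Fin j) :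
    nsEmb V₀ V₁ j x ≠ Sum.inr (Sum.inr p) := by
  rcases x with a | b | q
  · simp [emb_inl]
  · simp [emb_inr]
  · exact q.elim0

lemma mem_phi_iff [DecidableEq V₀] [DecidableEq V₁] {D : Finset (V₀ ⊕ V₁ ⊕ Fin 0)}
    {v : V₀ ⊕ V₁ ⊕ Fin j} :
    v ∈ D.map (nsEmb V₀ V₁ j) ∪ univ.image (fun p : Fin j => Sum.inr (Sum.inr p)) ↔
      (∃ x ∈ D, nsEmb V₀ V₁ j x = v) ∨ (∃ p : Fin j, v = Sum.inr (Sum.inr p)) := by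
  simp only [Finset.mem_union, Finset.mem_map, Finset.mem_image, Finset.mem_univ, true_and]
  constructor
  · rintro (⟨x, hx, he⟩ | ⟨p, hp⟩)
    · exact Or.inl ⟨x, hx, he⟩
    · exact Or.inr ⟨p, hp.symm⟩
  · rintro (⟨x, hx, he⟩ | ⟨p, hp⟩)
    · exact Or.inl ⟨x, hx, he⟩
    · exact Or.inr ⟨p, hp.symm⟩

lemma mem_phi_inl [DecidableEq V₀] [DecidableEq V₁] {D : Finset (V₀ ⊕ V₁ ⊕ Fin 0)} {a : V₀} :
    (Sum.inl a : V₀ ⊕ V₁ ⊕ Fin j) ∈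
      D.map (nsEmb V₀ V₁ j) ∪ univ.image (fun p : Fin j => Sum.inr (Sum.inr p)) ↔
      (Sum.inl a : V₀ ⊕ V₁ ⊕ Fin 0) ∈ D := by
  rw [mem_phi_iff]
  constructor
  · rintro (⟨x, hx, he⟩ | ⟨p, hp⟩)
    · rcases x with a' | b' | q
      · rw [emb_inl] at he; cases he; exact hx
      · rw [emb_inr] at he; cases he
      · exact q.elim0
    · cases hp
  · intro h; exact Or.inl ⟨Sum.inl a, h, rfl⟩

lemma mem_phi_inr [DecidableEq V₀] [DecidableEq V₁] {D : Finset (V₀ ⊕ V₁ ⊕ Fin 0)} {b : V₁} :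
    (Sum.inr (Sum.inl b) : V₀ ⊕ V₁ ⊕ Fin j) ∈
      D.map (nsEmb V₀ V₁ j) ∪ univ.image (fun p : Fin j => Sum.inr (Sum.inr p)) ↔
      (Sum.inr (Sum.inl b) : V₀ ⊕ V₁ ⊕ Fin 0) ∈ D := by
  rw [mem_phi_iff]
  constructor
  · rintro (⟨x, hx, he⟩ | ⟨p, hp⟩)
    · rcases x with a' | b' | q
      · rw [emb_inl] at he; cases he
      · rw [emb_inr] at he; cases he; exact hx
      · exact q.elim0
    · cases hp
  · intro h; exact Or.inl ⟨Sum.inr (Sum.inl b), h, rfl⟩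

lemma mem_phi_p [DecidableEq V₀] [DecidableEq V₁] {D : Finset (V₀ ⊕ V₁ ⊕ Fin 0)} (p : Fin j) :
    (Sum.inr (Sum.inr p) : V₀ ⊕ V₁ ⊕ Fin j) ∈
      D.map (nsEmb V₀ V₁ j) ∪ univ.image (fun q : Fin j => Sum.inr (Sum.inr q)) :=
  mem_phi_iff.mpr (Or.inr ⟨p, rfl⟩)

lemma reach_p {D' : Finset (V₀ ⊕ V₁ ⊕ Fin j)} (h0 : Sum.inl r₀ ∈ D')
    (hp : ∀ p : Fin j, Sum.inr (Sum.inr p) ∈ D') (p : Fin j) :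
    ((nsGraph G₀ G₁ r₀ r₁ j).induce (D' : Set _)).Reachable
      ⟨Sum.inl r₀, h0⟩ ⟨Sum.inr (Sum.inr p), hp p⟩ := by
  obtain ⟨n, hn⟩ := p
  induction n with
  | zero => exact SimpleGraph.Adj.reachable (adj_r0_p (G₀ := G₀) (G₁ := G₁) (r₁ := r₁) (p := ⟨0, hn⟩) rfl)
  | succ n ih =>
    have hn' : n < j := by omega
    exact (ih hn').trans
      (SimpleGraph.Adj.reachable (adj_p_p (G₀ := G₀) (G₁ := G₁) (r₀ := r₀) (r₁ := r₁) (p := ⟨n, hn'⟩) (q := ⟨n + 1, hn⟩) rfl))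

lemma reach_r01 {D' : Finset (V₀ ⊕ V₁ ⊕ Fin j)} (h0 : Sum.inl r₀ ∈ D')
    (h1 : Sum.inr (Sum.inl r₁) ∈ D') (hp : ∀ p : Fin j, Sum.inr (Sum.inr p) ∈ D') :
    ((nsGraph G₀ G₁ r₀ r₁ j).induce (D' : Set _)).Reachable
      ⟨Sum.inl r₀, h0⟩ ⟨Sum.inr (Sum.inl r₁), h1⟩ := by
  cases j with
  | zero => exact SimpleGraph.Adj.reachable (adj_roots0 (G₀ := G₀) (G₁ := G₁))
  | succ j' =>
    exact (reach_p h0 hp ⟨j', Nat.lt_succ_self j'⟩).trans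
      (SimpleGraph.Adj.reachable (adj_r1_p (G₀ := G₀) (G₁ := G₁) (r₀ := r₀) (p := ⟨j', Nat.lt_succ_self j'⟩) rfl).symm)

lemma adjj_inl_inl {a b : V₀} (h : (nsGraph G₀ G₁ r₀ r₁ j).Adj (Sum.inl a) (Sum.inl b)) :
    G₀.Adj a b := by
  simp only [nsGraph, SimpleGraph.fromRel_adj] at h
  rcases h.2 with h' | h'
  · exact h'
  · exact h'.symm

lemma adjj_inr_inr {a b : V₁}
    (h : (nsGraph G₀ G₁ r₀ r₁ j).Adj (Sum.inr (Sum.inl a)) (Sum.inr (Sum.inl b))) :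
    G₁.Adj a b := by
  simp only [nsGraph, SimpleGraph.fromRel_adj] at h
  rcases h.2 with h' | h'
  · exact h'
  · exact h'.symm

lemma adjj_inl_inr {a : V₀} {b : V₁}
    (h : (nsGraph G₀ G₁ r₀ r₁ j).Adj (Sum.inl a) (Sum.inr (Sum.inl b))) :
    j = 0 ∧ a = r₀ ∧ b = r₁ := by
  simp only [nsGraph, SimpleGraph.fromRel_adj] at h
  tauto

lemma cds_forward [Fintype V₀] [Fintype V₁] [DecidableEq V₀] [DecidableEq V₁]
    (hV₀ : 2 ≤ Fintype.card V₀) (hV₁ : 2 ≤ Fintype.card V₁)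
    {D : Finset (V₀ ⊕ V₁ ⊕ Fin 0)} (hD : ConnDomSet (nsGraph G₀ G₁ r₀ r₁ 0) D) :
    ConnDomSet (nsGraph G₀ G₁ r₀ r₁ j)
      (D.map (nsEmb V₀ V₁ j) ∪ univ.image (fun p : Fin j => Sum.inr (Sum.inr p))) := by
  obtain ⟨-, hr0, hr1⟩ := cds_mem hV₀ hV₁ hD
  obtain ⟨hne, hconn, hdom⟩ := hD
  set D' : Finset (V₀ ⊕ V₁ ⊕ Fin j) :=
    D.map (nsEmb V₀ V₁ j) ∪ univ.image (fun p : Fin j => Sum.inr (Sum.inr p)) with hD'def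
  have hr0' : Sum.inl r₀ ∈ D' := mem_phi_inl.mpr hr0
  have hr1' : Sum.inr (Sum.inl r₁) ∈ D' := mem_phi_inr.mpr hr1
  have hp' : ∀ p : Fin j, Sum.inr (Sum.inr p) ∈ D' := fun p => mem_phi_p p
  refine ⟨⟨_, hr0'⟩, ?_, ?_⟩
  · -- connectivity
    rw [SimpleGraph.connected_iff]
    refine ⟨?_, ⟨⟨Sum.inl r₀, hr0'⟩⟩⟩
    have key : ∀ z : (D' : Set (V₀ ⊕ V₁ ⊕ Fin j)),
        ((nsGraph G₀ G₁ r₀ r₁ j).induce (D' : Set _)).Reachable z ⟨Sum.inl r₀, hr0'⟩ := by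
      rintro ⟨v, hv⟩
      rcases mem_phi_iff.mp hv with ⟨x, hxD, rfl⟩ | ⟨p, rfl⟩
      · -- v = emb x
        obtain ⟨w0⟩ := hconn.preconnected ⟨x, hxD⟩ ⟨Sum.inl r₀, hr0⟩
        have hf : ∀ z1 z2 : (D : Set (V₀ ⊕ V₁ ⊕ Fin 0)),
            ((nsGraph G₀ G₁ r₀ r₁ 0).induce (D : Set _)).Adj z1 z2 →
            ((nsGraph G₀ G₁ r₀ r₁ j).induce (D' : Set _)).Reachable
              ⟨nsEmb V₀ V₁ j z1.1, mem_phi_iff.mpr (Or.inl ⟨z1.1, z1.2, rfl⟩)⟩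
              ⟨nsEmb V₀ V₁ j z2.1, mem_phi_iff.mpr (Or.inl ⟨z2.1, z2.2, rfl⟩)⟩ := by
          rintro ⟨v1, hv1⟩ ⟨v2, hv2⟩ hadj
          have hadj' : (nsGraph G₀ G₁ r₀ r₁ 0).Adj v1 v2 := hadj
          rcases v1 with a1 | b1 | q <;> rcases v2 with a2 | b2 | q
          · exact SimpleGraph.Adj.reachable (adj_inl (G₁ := G₁) (r₀ := r₀) (r₁ := r₁) (j := j) (adjj_inl_inl hadj'))
          · obtain ⟨-, rfl, rfl⟩ := adjj_inl_inr hadj'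
            exact reach_r01 hr0' hr1' hp'
          · exact q.elim0
          · obtain ⟨-, rfl, rfl⟩ := adjj_inl_inr hadj'.symm
            exact (reach_r01 hr0' hr1' hp').symm
          · exact SimpleGraph.Adj.reachable (adj_inr (G₀ := G₀) (r₀ := r₀) (r₁ := r₁) (j := j) (adjj_inr_inr hadj'))
          · exact q.elim0
          all_goals exact q.elim0
        have := reach_of_walk
          (f := fun z : (D : Set (V₀ ⊕ V₁ ⊕ Fin 0)) =>
            (⟨nsEmb V₀ V₁ j z.1, mem_phi_iff.mpr (Or.inl ⟨z.1, z.2, rfl⟩)⟩ :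
              (D' : Set (V₀ ⊕ V₁ ⊕ Fin j)))) hf w0
        exact this
      · exact (reach_p hr0' hp' p).symm
    intro z1 z2
    exact (key z1).trans (key z2).symm
  · -- domination
    intro v
    rcases v with a | b | p
    · rcases hdom (Sum.inl a) with h | ⟨u, hu, hadj⟩
      · exact Or.inl (mem_phi_inl.mpr h)
      · rcases u with a' | b' | q
        · exact Or.inr ⟨Sum.inl a', mem_phi_inl.mpr hu, adj_inl (adjj_inl_inl hadj)⟩
        · -- u = inr inl b', so a = r₀
          have ha : a = r₀ := adj_to_left (by simp [lev]) hadj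
          subst ha
          cases j with
          | zero =>
            exact Or.inr ⟨Sum.inr (Sum.inl r₁), mem_phi_inr.mpr hr1,
              (adj_roots0 (G₀ := G₀) (G₁ := G₁)).symm⟩
          | succ j' =>
            exact Or.inr ⟨Sum.inr (Sum.inr ⟨0, Nat.succ_pos j'⟩),
              mem_phi_p _, (adj_r0_p rfl).symm⟩
        · exact q.elim0
    · rcases hdom (Sum.inr (Sum.inl b)) with h | ⟨u, hu, hadj⟩
      · exact Or.inl (mem_phi_inr.mpr h)
      · rcases u with a' | b' | q
        · -- u = inl a', so b = r₁
          have hb : b = r₁ := adj_to_right (by simp [lev]) hadj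
          subst hb
          cases j with
          | zero =>
            exact Or.inr ⟨Sum.inl r₀, mem_phi_inl.mpr hr0,
              adj_roots0 (G₀ := G₀) (G₁ := G₁)⟩
          | succ j' =>
            exact Or.inr ⟨Sum.inr (Sum.inr ⟨j', Nat.lt_succ_self j'⟩),
              mem_phi_p _, (adj_r1_p rfl).symm⟩
        · exact Or.inr ⟨Sum.inr (Sum.inl b'), mem_phi_inr.mpr hu, adj_inr (adjj_inr_inr hadj)⟩
        · exact q.elim0
    · exact Or.inl (mem_phi_p p)

lemma adjj_inl_path {a : V₀} {p : Fin j}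
    (h : (nsGraph G₀ G₁ r₀ r₁ j).Adj (Sum.inl a) (Sum.inr (Sum.inr p))) :
    a = r₀ := by
  simp only [nsGraph, SimpleGraph.fromRel_adj] at h
  tauto

lemma adjj_inr_path {b : V₁} {p : Fin j}
    (h : (nsGraph G₀ G₁ r₀ r₁ j).Adj (Sum.inr (Sum.inl b)) (Sum.inr (Sum.inr p))) :
    b = r₁ := by
  simp only [nsGraph, SimpleGraph.fromRel_adj] at h
  tauto

def proj (r₀ : V₀) : (V₀ ⊕ V₁ ⊕ Fin j) → (V₀ ⊕ V₁ ⊕ Fin 0)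
  | Sum.inl a => Sum.inl a
  | Sum.inr (Sum.inl b) => Sum.inr (Sum.inl b)
  | Sum.inr (Sum.inr _) => Sum.inl r₀

lemma proj_emb (x : V₀ ⊕ V₁ ⊕ Fin 0) : proj (j := j) r₀ (nsEmb V₀ V₁ j x) = x := by
  rcases x with a | b | q
  · rfl
  · rfl
  · exact q.elim0

lemma phi_inj [DecidableEq V₀] [DecidableEq V₁] {D₁ D₂ : Finset (V₀ ⊕ V₁ ⊕ Fin 0)}
    (h : D₁.map (nsEmb V₀ V₁ j) ∪ univ.image (fun p : Fin j => Sum.inr (Sum.inr p)) =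
      D₂.map (nsEmb V₀ V₁ j) ∪ univ.image (fun p : Fin j => Sum.inr (Sum.inr p))) :
    D₁ = D₂ := by
  ext x
  rcases x with a | b | q
  · rw [← mem_phi_inl (j := j) (D := D₁), ← mem_phi_inl (j := j) (D := D₂), h]
  · rw [← mem_phi_inr (j := j) (D := D₁), ← mem_phi_inr (j := j) (D := D₂), h]
  · exact q.elim0

lemma phi_card [DecidableEq V₀] [DecidableEq V₁] (D : Finset (V₀ ⊕ V₁ ⊕ Fin 0)) :
    (D.map (nsEmb V₀ V₁ j) ∪ univ.image (fun p : Fin j => Sum.inr (Sum.inr p))).card =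
      D.card + j := by
  rw [Finset.card_union_of_disjoint, Finset.card_map,
    Finset.card_image_of_injective _ (fun p q hpq => by simpa using hpq),
    Finset.card_univ, Fintype.card_fin]
  rw [Finset.disjoint_left]
  rintro x hx hx2
  rw [Finset.mem_map] at hx
  rw [Finset.mem_image] at hx2
  obtain ⟨y, -, rfl⟩ := hx
  obtain ⟨p, -, hp⟩ := hx2
  exact emb_ne_path y p hp.symm

lemma cds_backward [Fintype V₀] [Fintype V₁] [DecidableEq V₀] [DecidableEq V₁]
    (hV₀ : 2 ≤ Fintype.card V₀) (hV₁ : 2 ≤ Fintype.card V₁)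
    {D' : Finset (V₀ ⊕ V₁ ⊕ Fin j)} (hD' : ConnDomSet (nsGraph G₀ G₁ r₀ r₁ j) D') :
    ∃ D : Finset (V₀ ⊕ V₁ ⊕ Fin 0), ConnDomSet (nsGraph G₀ G₁ r₀ r₁ 0) D ∧
      D.map (nsEmb V₀ V₁ j) ∪ univ.image (fun p : Fin j => Sum.inr (Sum.inr p)) = D' := by
  obtain ⟨hpth, hr0', hr1'⟩ := cds_mem hV₀ hV₁ hD'
  obtain ⟨hne, hconn, hdom⟩ := hD'
  set D : Finset (V₀ ⊕ V₁ ⊕ Fin 0) :=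
    D'.preimage (nsEmb V₀ V₁ j) ((nsEmb V₀ V₁ j).injective.injOn) with hDdef
  have memD : ∀ x, x ∈ D ↔ nsEmb V₀ V₁ j x ∈ D' := fun x => Finset.mem_preimage
  have hr0 : (Sum.inl r₀ : V₀ ⊕ V₁ ⊕ Fin 0) ∈ D := (memD _).mpr hr0'
  have hr1 : (Sum.inr (Sum.inl r₁) : V₀ ⊕ V₁ ⊕ Fin 0) ∈ D := (memD _).mpr hr1'
  refine ⟨D, ⟨⟨_, hr0⟩, ?_, ?_⟩, ?_⟩
  · -- connectivity
    rw [SimpleGraph.connected_iff]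
    refine ⟨?_, ⟨⟨Sum.inl r₀, hr0⟩⟩⟩
    have hmemf : ∀ z : (D' : Set (V₀ ⊕ V₁ ⊕ Fin j)), proj (j := j) r₀ z.1 ∈ D := by
      rintro ⟨v, hv⟩
      rcases v with a | b | p
      · exact (memD _).mpr hv
      · exact (memD _).mpr hv
      · exact hr0
    have hf : ∀ z1 z2 : (D' : Set (V₀ ⊕ V₁ ⊕ Fin j)),
        ((nsGraph G₀ G₁ r₀ r₁ j).induce (D' : Set _)).Adj z1 z2 →
        ((nsGraph G₀ G₁ r₀ r₁ 0).induce (D : Set _)).Reachable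
          ⟨proj (j := j) r₀ z1.1, hmemf z1⟩ ⟨proj (j := j) r₀ z2.1, hmemf z2⟩ := by
      rintro ⟨v1, hv1⟩ ⟨v2, hv2⟩ hadj
      have hadj' : (nsGraph G₀ G₁ r₀ r₁ j).Adj v1 v2 := hadj
      rcases v1 with a1 | b1 | q1 <;> rcases v2 with a2 | b2 | q2
      · exact SimpleGraph.Adj.reachable
          (adj_inl (G₁ := G₁) (r₀ := r₀) (r₁ := r₁) (j := 0) (adjj_inl_inl hadj'))
      · obtain ⟨-, rfl, rfl⟩ := adjj_inl_inr hadj'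
        exact SimpleGraph.Adj.reachable (adj_roots0 (G₀ := G₀) (G₁ := G₁))
      · obtain rfl := adjj_inl_path hadj'
        exact SimpleGraph.Reachable.refl _
      · obtain ⟨-, rfl, rfl⟩ := adjj_inl_inr hadj'.symm
        exact SimpleGraph.Adj.reachable (adj_roots0 (G₀ := G₀) (G₁ := G₁)).symm
      · exact SimpleGraph.Adj.reachable
          (adj_inr (G₀ := G₀) (r₀ := r₀) (r₁ := r₁) (j := 0) (adjj_inr_inr hadj'))
      · obtain rfl := adjj_inr_path hadj'
        exact SimpleGraph.Adj.reachable (adj_roots0 (G₀ := G₀) (G₁ := G₁)).symm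
      · obtain rfl := adjj_inl_path hadj'.symm
        exact SimpleGraph.Reachable.refl _
      · obtain rfl := adjj_inr_path hadj'.symm
        exact SimpleGraph.Adj.reachable (adj_roots0 (G₀ := G₀) (G₁ := G₁))
      · exact SimpleGraph.Reachable.refl _
    rintro ⟨v1, hv1⟩ ⟨v2, hv2⟩
    obtain ⟨w0⟩ := hconn.preconnected
      ⟨nsEmb V₀ V₁ j v1, (memD _).mp hv1⟩ ⟨nsEmb V₀ V₁ j v2, (memD _).mp hv2⟩
    have := reach_of_walk
      (f := fun z : (D' : Set (V₀ ⊕ V₁ ⊕ Fin j)) =>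
        (⟨proj (j := j) r₀ z.1, hmemf z⟩ : (D : Set (V₀ ⊕ V₁ ⊕ Fin 0)))) hf w0
    have e1 : (⟨proj (j := j) r₀ (nsEmb V₀ V₁ j v1),
        hmemf ⟨nsEmb V₀ V₁ j v1, (memD _).mp hv1⟩⟩ : (D : Set (V₀ ⊕ V₁ ⊕ Fin 0))) =
        ⟨v1, hv1⟩ := Subtype.ext (proj_emb v1)
    have e2 : (⟨proj (j := j) r₀ (nsEmb V₀ V₁ j v2),
        hmemf ⟨nsEmb V₀ V₁ j v2, (memD _).mp hv2⟩⟩ : (D : Set (V₀ ⊕ V₁ ⊕ Fin 0))) =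
        ⟨v2, hv2⟩ := Subtype.ext (proj_emb v2)
    simpa only [e1, e2] using this
  · -- domination
    intro v
    rcases v with a | b | q
    · rcases hdom (Sum.inl a) with h | ⟨u, hu, hadj⟩
      · exact Or.inl ((memD _).mpr h)
      · rcases u with a' | b' | p
        · exact Or.inr ⟨Sum.inl a', (memD _).mpr hu,
            adj_inl (G₁ := G₁) (r₀ := r₀) (r₁ := r₁) (j := 0) (adjj_inl_inl hadj)⟩
        · obtain rfl := adj_to_left (by simp [lev]) hadj
          exact Or.inr ⟨Sum.inr (Sum.inl r₁), hr1,
            (adj_roots0 (G₀ := G₀) (G₁ := G₁)).symm⟩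
        · obtain rfl := adj_to_left (by simp [lev]) hadj
          exact Or.inr ⟨Sum.inr (Sum.inl r₁), hr1,
            (adj_roots0 (G₀ := G₀) (G₁ := G₁)).symm⟩
    · rcases hdom (Sum.inr (Sum.inl b)) with h | ⟨u, hu, hadj⟩
      · exact Or.inl ((memD _).mpr h)
      · rcases u with a' | b' | p
        · obtain rfl := adj_to_right (by simp [lev]) hadj
          exact Or.inr ⟨Sum.inl r₀, hr0, adj_roots0 (G₀ := G₀) (G₁ := G₁)⟩
        · exact Or.inr ⟨Sum.inr (Sum.inl b'), (memD _).mpr hu,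
            adj_inr (G₀ := G₀) (r₀ := r₀) (r₁ := r₁) (j := 0) (adjj_inr_inr hadj)⟩
        · obtain rfl := adj_to_right (by simp [lev]) hadj
          exact Or.inr ⟨Sum.inl r₀, hr0, adj_roots0 (G₀ := G₀) (G₁ := G₁)⟩
    · exact q.elim0
  · -- Φ D = D'
    ext v
    rcases v with a | b | q
    · rw [mem_phi_inl, memD]
      exact Iff.rfl
    · rw [mem_phi_inr, memD]
      exact Iff.rfl
    · exact iff_of_true (mem_phi_p q) (hpth q)

end NSaux

/-- Neck-stretching: every connected dominating set of `NS(G₀,G₁,k)` contains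
the internal path vertices and both roots; adding the internal vertices is a
bijection from connected dominating sets of `NS(G₀,G₁,1)` to those of
`NS(G₀,G₁,k)` shifting cardinality by `k - 1`; consequently
`D^c_{NS(G₀,G₁,k)}(-1) = (-1)^{k-1} · D^c_{NS(G₀,G₁,1)}(-1)`. -/
theorem neck_stretch_connected_dominating
    {V₀ V₁ : Type*} [Fintype V₀] [Fintype V₁] [DecidableEq V₀] [DecidableEq V₁]
    (G₀ : SimpleGraph V₀) (G₁ : SimpleGraph V₁) (r₀ : V₀) (r₁ : V₁)
    (hG₀ : G₀.Connected) (hG₁ : G₁.Connected)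
    (hV₀ : 2 ≤ Fintype.card V₀) (hV₁ : 2 ≤ Fintype.card V₁)
    (k : ℕ) (hk : 1 ≤ k) :
    (∀ D : Finset (V₀ ⊕ V₁ ⊕ Fin (k - 1)),
      ConnDomSet (nsGraph G₀ G₁ r₀ r₁ (k - 1)) D →
        (∀ p : Fin (k - 1), Sum.inr (Sum.inr p) ∈ D) ∧
        Sum.inl r₀ ∈ D ∧ Sum.inr (Sum.inl r₁) ∈ D) ∧
    (Set.BijOn
      (fun D : Finset (V₀ ⊕ V₁ ⊕ Fin 0) =>
        D.map (nsEmb V₀ V₁ (k - 1)) ∪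
          Finset.univ.image (fun p : Fin (k - 1) => Sum.inr (Sum.inr p)))
      {D | ConnDomSet (nsGraph G₀ G₁ r₀ r₁ 0) D}
      {D | ConnDomSet (nsGraph G₀ G₁ r₀ r₁ (k - 1)) D}) ∧
    (∀ D : Finset (V₀ ⊕ V₁ ⊕ Fin 0), ConnDomSet (nsGraph G₀ G₁ r₀ r₁ 0) D →
      (D.map (nsEmb V₀ V₁ (k - 1)) ∪
        Finset.univ.image (fun p : Fin (k - 1) => Sum.inr (Sum.inr p))).card =
        D.card + (k - 1)) ∧
    (∑ D : Finset (V₀ ⊕ V₁ ⊕ Fin (k - 1)),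
        if ConnDomSet (nsGraph G₀ G₁ r₀ r₁ (k - 1)) D then
          (-1 : ℤ) ^ D.card else 0) =
      (-1 : ℤ) ^ (k - 1) *
        ∑ D : Finset (V₀ ⊕ V₁ ⊕ Fin 0),
          if ConnDomSet (nsGraph G₀ G₁ r₀ r₁ 0) D then (-1 : ℤ) ^ D.card
          else 0 := by
  open NSaux in
  refine ⟨fun D hD => cds_mem hV₀ hV₁ hD, ⟨?_, ?_, ?_⟩, fun D _ => phi_card D, ?_⟩
  · intro D hD
    exact cds_forward hV₀ hV₁ hD
  · intro D₁ _ D₂ _ h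
    exact phi_inj h
  · intro D' hD'
    obtain ⟨D, hcds, heq⟩ := cds_backward hV₀ hV₁ hD'
    exact ⟨D, hcds, heq⟩
  · have hbij := Finset.sum_bij
      (s := univ.filter fun D => ConnDomSet (nsGraph G₀ G₁ r₀ r₁ 0) D)
      (t := univ.filter fun D => ConnDomSet (nsGraph G₀ G₁ r₀ r₁ (k - 1)) D)
      (f := fun D => (-1 : ℤ) ^ (D.card + (k - 1)))
      (g := fun D => (-1 : ℤ) ^ D.card)
      (i := fun D _ => D.map (nsEmb V₀ V₁ (k - 1)) ∪
        univ.image (fun p : Fin (k - 1) => Sum.inr (Sum.inr p)))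
      (fun D hD => mem_filter.mpr ⟨mem_univ _, cds_forward hV₀ hV₁ (mem_filter.mp hD).2⟩)
      (fun D₁ _ D₂ _ h => phi_inj h)
      (fun D' hD' => by
        obtain ⟨D, h1, h2⟩ := cds_backward hV₀ hV₁ (mem_filter.mp hD').2
        exact ⟨D, mem_filter.mpr ⟨mem_univ _, h1⟩, h2⟩)
      (fun D _ => by
        show (-1 : ℤ) ^ (D.card + (k - 1)) = (-1 : ℤ) ^ (D.map (nsEmb V₀ V₁ (k - 1)) ∪
          univ.image (fun p : Fin (k - 1) => Sum.inr (Sum.inr p))).card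
        rw [phi_card])
    rw [← Finset.sum_filter, ← Finset.sum_filter, ← hbij, Finset.mul_sum]
    refine Finset.sum_congr rfl fun D _ => ?_
    show (-1 : ℤ) ^ (D.card + (k - 1)) = (-1 : ℤ) ^ (k - 1) * (-1) ^ D.card
    rw [pow_add, mul_comm]
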